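/- For every k ≥ 1, as z → −1 in the slit plane, κ₁^{(k)}(z) = a_k + b_k(z)(1+z)^{3/2} where a_k = κ₁^{(k)}(−1) and lim_{z→−1} b_k(z) = (2√2/(3π)) · Π_{j=1}^{k−1} κ₁'(κ₁^{(j)}(−1)) > 0. -/

import Mathlib

open Real Complex Filter

/-- The slit plane `ℂ \ [1,∞) \ (−∞,−1]`. -/
def Dslit : Set ℂ := {z : ℂ | ¬(z.im = 0 ∧ (1 ≤ z.re ∨ z.re ≤ -1))}

/-- Analytic extension of the degree-1 arc-cosine kernel to the slit plane. -/
noncomputable def K1C (z : ℂ) : ℂ :=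
  (z * ((Real.pi : ℂ) + Complex.I * Complex.log (z + Complex.I * ((1 - z ^ 2) ^ ((1 : ℂ) / 2))))
    + (1 - z ^ 2) ^ ((1 : ℂ) / 2)) / (Real.pi : ℂ)

/-- The degree-0 arc-cosine kernel κ₀ = κ₁' on [-1,1]. -/
noncomputable def k0Real (u : ℝ) : ℝ := (Real.pi - Real.arccos u) / Real.pi

/-- The degree-1 arc-cosine kernel on [-1,1]. -/
noncomputable def k1Real (u : ℝ) : ℝ :=
  (u * (Real.pi - Real.arccos u) + Real.sqrt (1 - u ^ 2)) / Real.pi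

noncomputable def sC (z : ℂ) : ℂ := (1 - z ^ 2) ^ ((1 : ℂ) / 2)

noncomputable def tC (z : ℂ) : ℂ :=
  (Real.pi : ℂ) + Complex.I * Complex.log (z + Complex.I * sC z)

noncomputable def Phi (t : ℂ) : ℂ :=
  (Complex.sin t - t * Complex.cos t) /
    (((2 * Real.sqrt 2 * Real.pi : ℝ) : ℂ) * Complex.sin (t / 2) ^ 3)

lemma K1C_eq (z : ℂ) : K1C z = (z * tC z + sC z) / (Real.pi : ℂ) := rfl

lemma sC_sq {z : ℂ} (h : 1 - z ^ 2 ≠ 0) : sC z ^ 2 = 1 - z ^ 2 := by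
  rw [sC, ← Complex.cpow_natCast, ← Complex.cpow_mul]
  · norm_num
  · have h1 := Complex.neg_pi_lt_arg (1 - z^2)
    simp only [Complex.mul_im, Complex.log_im, Complex.log_re]
    norm_num
    nlinarith [Real.pi_pos]
  · have h2 := Complex.arg_le_pi (1 - z^2)
    simp only [Complex.mul_im, Complex.log_im, Complex.log_re]
    norm_num
    nlinarith [Real.pi_pos]

lemma zeta_mul {z : ℂ} (h : 1 - z ^ 2 ≠ 0) : (z - Complex.I * sC z) * (z + Complex.I * sC z) = 1 := by
  have hs := sC_sq h
  linear_combination (-(sC z ^ 2)) * Complex.I_sq + hs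

lemma zeta_ne_zero {z : ℂ} (h : 1 - z ^ 2 ≠ 0) : z + Complex.I * sC z ≠ 0 := by
  intro h0
  have := zeta_mul h
  rw [h0, mul_zero] at this
  exact one_ne_zero this.symm

lemma cos_tC {z : ℂ} (h : 1 - z ^ 2 ≠ 0) : Complex.cos (tC z) = -z := by
  have hζ := zeta_ne_zero h
  have hexp : Complex.exp (Complex.log (z + Complex.I * sC z)) = z + Complex.I * sC z :=
    Complex.exp_log hζ
  have hexpneg : Complex.exp (-Complex.log (z + Complex.I * sC z)) = z - Complex.I * sC z := by
    rw [Complex.exp_neg, hexp]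
    exact (eq_inv_of_mul_eq_one_left (zeta_mul h)).symm
  rw [tC, Complex.cos_add, mul_comm Complex.I, Complex.cos_mul_I, Complex.sin_mul_I]
  have hcosh : Complex.cosh (Complex.log (z + Complex.I * sC z)) = z := by
    show (Complex.exp _ + Complex.exp _) / 2 = z
    rw [hexp, hexpneg]; ring
  have hcpi : Complex.cos (Real.pi : ℂ) = -1 := by
    rw [← Complex.ofReal_cos, Real.cos_pi]; norm_num
  have hspi : Complex.sin (Real.pi : ℂ) = 0 := by
    rw [← Complex.ofReal_sin, Real.sin_pi]; norm_num
  rw [hcosh, hcpi, hspi]; ring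

lemma sin_tC {z : ℂ} (h : 1 - z ^ 2 ≠ 0) : Complex.sin (tC z) = sC z := by
  have hζ := zeta_ne_zero h
  have hexp : Complex.exp (Complex.log (z + Complex.I * sC z)) = z + Complex.I * sC z :=
    Complex.exp_log hζ
  have hexpneg : Complex.exp (-Complex.log (z + Complex.I * sC z)) = z - Complex.I * sC z := by
    rw [Complex.exp_neg, hexp]
    exact (eq_inv_of_mul_eq_one_left (zeta_mul h)).symm
  rw [tC, Complex.sin_add, mul_comm Complex.I, Complex.cos_mul_I, Complex.sin_mul_I]
  have hsinh : Complex.sinh (Complex.log (z + Complex.I * sC z)) = Complex.I * sC z := by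
    show (Complex.exp _ - Complex.exp _) / 2 = _
    rw [hexp, hexpneg]; ring
  have hcpi : Complex.cos (Real.pi : ℂ) = -1 := by
    rw [← Complex.ofReal_cos, Real.cos_pi]; norm_num
  have hspi : Complex.sin (Real.pi : ℂ) = 0 := by
    rw [← Complex.ofReal_sin, Real.sin_pi]; norm_num
  rw [hsinh, hcpi, hspi]
  linear_combination (-(sC z)) * Complex.I_sq

lemma K1C_form {z : ℂ} (h : 1 - z ^ 2 ≠ 0) :
    K1C z = (Complex.sin (tC z) - tC z * Complex.cos (tC z)) / (Real.pi : ℂ) := by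
  rw [K1C_eq, sin_tC h, cos_tC h]; ring

lemma Dslit_sq_ne {z : ℂ} (hz : z ∈ Dslit) : 1 - z ^ 2 ≠ 0 := by
  intro h
  have h2 : (z - 1) * (z + 1) = 0 := by linear_combination -h
  rcases mul_eq_zero.mp h2 with h1 | h1
  · have : z = 1 := by linear_combination h1
    subst this
    exact hz ⟨by simp, Or.inl (by simp)⟩
  · have : z = -1 := by linear_combination h1
    subst this
    exact hz ⟨by simp, Or.inr (by simp)⟩

lemma re_tC_eq (z : ℂ) : (tC z).re = Real.pi - Complex.arg (z + Complex.I * sC z) := by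
  simp [tC, Complex.add_re, Complex.mul_re, Complex.log_im]
  ring

lemma re_tC_pos {z : ℂ} (hz : z ∈ Dslit) : 0 < (tC z).re := by
  have h := Dslit_sq_ne hz
  rw [re_tC_eq]
  have harg := Complex.arg_le_pi (z + Complex.I * sC z)
  rcases lt_or_eq_of_le harg with h1 | h1
  · linarith
  · exfalso
    obtain ⟨hre, him⟩ := Complex.arg_eq_pi_iff.mp h1
    set ζ := z + Complex.I * sC z with hζdef
    have hζa : ζ = ((ζ.re : ℝ) : ℂ) := by
      apply Complex.ext <;> simp [him]
    have hinv : z - Complex.I * sC z = ζ⁻¹ := eq_inv_of_mul_eq_one_left (zeta_mul h)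
    have h2z : 2 * z = ζ + ζ⁻¹ := by rw [← hinv, hζdef]; ring
    set a := ζ.re with ha
    have hz2 : z = (((a + a⁻¹) / 2 : ℝ) : ℂ) := by
      have : z = (ζ + ζ⁻¹) / 2 := by linear_combination h2z / 2
      rw [this, hζa]
      push_cast
      ring
    have him0 : z.im = 0 := by rw [hz2]; simp
    have hre1 : z.re ≤ -1 := by
      rw [hz2]
      simp only [Complex.ofReal_re]
      have ha1 : a * a⁻¹ = 1 := mul_inv_cancel₀ (by intro h0; rw [h0] at hre; simp at hre)
      nlinarith [sq_nonneg (a + 1)]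
    exact hz ⟨him0, Or.inr hre1⟩

lemma re_tC_lt (z : ℂ) : (tC z).re < 2 * Real.pi := by
  rw [re_tC_eq]
  have := Complex.neg_pi_lt_arg (z + Complex.I * sC z)
  linarith

lemma abs_sC (z : ℂ) : ‖sC z‖ = Real.sqrt (‖1 - z ^ 2‖) := by
  rcases eq_or_ne (1 - z ^ 2) 0 with h | h
  · rw [sC, h, Complex.zero_cpow (by norm_num)]
    simp
  · rw [sC, Complex.norm_cpow_of_ne_zero h]
    norm_num
    rw [Real.sqrt_eq_rpow]

lemma tendsto_sC_zero : Tendsto sC (nhds (-1 : ℂ)) (nhds 0) := by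
  rw [tendsto_zero_iff_norm_tendsto_zero]
  simp only [abs_sC]
  have : Tendsto (fun z : ℂ => Real.sqrt (‖1 - z ^ 2‖)) (nhds (-1)) 
      (nhds (Real.sqrt (‖(1 : ℂ) - (-1) ^ 2‖))) := by
    exact Continuous.tendsto (f := fun z : ℂ => Real.sqrt ‖1 - z ^ 2‖) (by fun_prop) (-1)
  simpa using this

lemma re_sC_nonneg (z : ℂ) : 0 ≤ (sC z).re := by
  rcases eq_or_ne (1 - z ^ 2) 0 with h | h
  · rw [sC, h, Complex.zero_cpow (by norm_num)]
    simp
  · rw [sC, Complex.cpow_def_of_ne_zero h, Complex.exp_re]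
    apply mul_nonneg (Real.exp_pos _).le
    apply Real.cos_nonneg_of_mem_Icc
    constructor
    · simp only [Complex.mul_im, Complex.log_im, Complex.log_re]
      norm_num
      nlinarith [Complex.neg_pi_lt_arg (1 - z^2), Real.pi_pos]
    · simp only [Complex.mul_im, Complex.log_im, Complex.log_re]
      norm_num
      nlinarith [Complex.arg_le_pi (1 - z^2), Real.pi_pos]

lemma im_zeta_nonneg : ∀ᶠ z in nhdsWithin (-1 : ℂ) Dslit, 0 ≤ (z + Complex.I * sC z).im := by
  have h1 : ∀ᶠ z in nhdsWithin (-1 : ℂ) Dslit, ‖sC z‖ < 1/2 := by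
    have ht := tendsto_sC_zero.mono_left
      (nhdsWithin_le_nhds : nhdsWithin (-1:ℂ) Dslit ≤ _)
    have hmem := ht (Metric.ball_mem_nhds (0 : ℂ) (by norm_num : (0:ℝ) < 1/2))
    filter_upwards [hmem] with z hz
    simpa [Metric.mem_ball, Complex.dist_eq] using hz
  have h2 : ∀ᶠ z in nhdsWithin (-1 : ℂ) Dslit, z.re < -1/2 := by
    apply eventually_nhdsWithin_of_eventually_nhds
    have : Tendsto (fun z : ℂ => z.re) (nhds (-1)) (nhds (-1)) := by
      simpa using (Complex.continuous_re.tendsto (-1 : ℂ))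
    exact this.eventually_lt_const (by norm_num)
  filter_upwards [h1, h2, self_mem_nhdsWithin] with z hs hre hz
  simp only [Complex.add_im, Complex.mul_im, Complex.I_re, Complex.I_im]
  ring_nf
  -- goal should be 0 ≤ z.im + (sC z).re  (modulo form)
  have hsre := re_sC_nonneg z
  rcases le_or_gt 0 z.im with him | him
  · linarith
  · have hsq := sC_sq (Dslit_sq_ne hz)
    have hprod : (sC z).re * (sC z).im = -(z.re * z.im) := by
      have := congrArg Complex.im hsq
      simp only [pow_two, Complex.mul_im, Complex.sub_im, Complex.one_im] at this
      linarith
    have habs : |(sC z).im| ≤ 1/2 := le_trans (Complex.abs_im_le_norm _) hs.le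
    have h3 : -(1:ℝ)/2 ≤ (sC z).im := by cases abs_le.mp habs; linarith
    have h4 : (sC z).im ≤ 1/2 := by cases abs_le.mp habs; linarith
    nlinarith [mul_nonneg hsre hsre]

lemma tendsto_tC : Tendsto tC (nhdsWithin (-1 : ℂ) Dslit) (nhdsWithin 0 {t : ℂ | t ≠ 0}) := by
  rw [tendsto_nhdsWithin_iff]
  constructor
  · have hζ : Tendsto (fun z : ℂ => z + Complex.I * sC z) (nhdsWithin (-1 : ℂ) Dslit)
        (nhdsWithin (-1 : ℂ) {w : ℂ | 0 ≤ w.im}) := by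
      rw [tendsto_nhdsWithin_iff]
      refine ⟨?_, im_zeta_nonneg⟩
      have h1 : Tendsto (fun z : ℂ => z + Complex.I * sC z) (nhds (-1 : ℂ))
          (nhds (-1 + Complex.I * 0)) :=
        tendsto_id.add (tendsto_const_nhds.mul tendsto_sC_zero)
      simp only [mul_zero, add_zero] at h1
      exact h1.mono_left nhdsWithin_le_nhds
    have hlog := Complex.tendsto_log_nhdsWithin_im_nonneg_of_re_neg_of_im_zero
      (z := (-1 : ℂ)) (by norm_num) (by norm_num)
    have hlogval : Real.log ‖(-1 : ℂ)‖ + Real.pi * Complex.I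
        = Real.pi * Complex.I := by simp
    rw [hlogval] at hlog
    have := hlog.comp hζ
    have h2 : Tendsto tC (nhdsWithin (-1 : ℂ) Dslit)
        (nhds ((Real.pi : ℂ) + Complex.I * (Real.pi * Complex.I))) :=
      tendsto_const_nhds.add (tendsto_const_nhds.mul this)
    have h3 : (Real.pi : ℂ) + Complex.I * (Real.pi * Complex.I) = 0 := by
      linear_combination (Real.pi : ℂ) * Complex.I_sq
    rwa [h3] at h2
  · filter_upwards [self_mem_nhdsWithin] with z hz
    intro h0
    have := re_tC_pos hz
    rw [h0] at this
    simp at this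

-- Taylor estimate
lemma key_bound (t : ℂ) (ht : ‖t‖ ≤ 1) :
    ‖Complex.sin t - t * Complex.cos t - t ^ 3 / 3‖ ≤ 5 / 48 * ‖t‖ ^ 4 := by
  have h4 : (0:ℕ) < 4 := by norm_num
  have habs1 : ‖t * Complex.I‖ ≤ 1 := by simpa using ht
  have habs2 : ‖-(t * Complex.I)‖ ≤ 1 := by simpa using ht
  have hb1 := Complex.exp_bound habs1 h4
  have hb2 := Complex.exp_bound habs2 h4
  have hsum1 : ∑ m ∈ Finset.range 4, (t * Complex.I) ^ m / m.factorial
      = 1 + t * Complex.I - t ^ 2 / 2 - t ^ 3 * Complex.I / 6 := by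
    simp [Finset.sum_range_succ, Nat.factorial]
    linear_combination (t ^ 2 / 2 + t ^ 3 * Complex.I / 6) * Complex.I_sq
  have hsum2 : ∑ m ∈ Finset.range 4, (-(t * Complex.I)) ^ m / m.factorial
      = 1 - t * Complex.I - t ^ 2 / 2 + t ^ 3 * Complex.I / 6 := by
    simp [Finset.sum_range_succ, Nat.factorial]
    linear_combination (t ^ 2 / 2 - t ^ 3 * Complex.I / 6) * Complex.I_sq
  rw [hsum1] at hb1
  rw [hsum2] at hb2
  set A := Complex.exp (t * Complex.I) - (1 + t * Complex.I - t ^ 2 / 2 - t ^ 3 * Complex.I / 6) with hA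
  set B := Complex.exp (-(t * Complex.I)) - (1 - t * Complex.I - t ^ 2 / 2 + t ^ 3 * Complex.I / 6) with hB
  have hident : Complex.sin t - t * Complex.cos t - t ^ 3 / 3
      = (B - A) * Complex.I / 2 - t * (A + B) / 2 := by
    rw [Complex.sin, Complex.cos, hA, hB]
    ring_nf
    simp only [Complex.I_sq, Complex.I_pow_four]
    ring
  rw [hident]
  have hAbnd : ‖A‖ ≤ ‖t‖ ^ 4 * (5 / 96) := by
    convert hb1 using 2
    · simp
    · norm_num [Nat.factorial]
  have hBbnd : ‖B‖ ≤ ‖t‖ ^ 4 * (5 / 96) := by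
    convert hb2 using 2
    · simp
    · norm_num [Nat.factorial]
  have ht5 : ‖t‖ ^ 5 ≤ ‖t‖ ^ 4 :=
    pow_le_pow_of_le_one (norm_nonneg t) ht (by norm_num)
  have tri : ‖(B - A) * Complex.I / 2 - t * (A + B) / 2‖
      ≤ ‖(B - A) * Complex.I / 2‖ + ‖t * (A + B) / 2‖ := by
    simpa using norm_sub_le ((B - A) * Complex.I / 2) (t * (A + B) / 2)
  have habsBA : ‖B - A‖ ≤ ‖t‖ ^ 4 * (5 / 96) * 2 := by
    have h := norm_sub_le B A
    linarith
  have habsAB : ‖A + B‖ ≤ ‖t‖ ^ 4 * (5 / 96) * 2 := by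
    have h := norm_add_le A B
    linarith
  have e1 : ‖(B - A) * Complex.I / 2‖ ≤ ‖t‖ ^ 4 * (5 / 96) := by
    rw [norm_div, norm_mul]
    simp only [Complex.norm_I, mul_one, Complex.norm_two]
    linarith
  have e2 : ‖t * (A + B) / 2‖ ≤ ‖t‖ ^ 4 * (5 / 96) := by
    rw [norm_div, norm_mul]
    simp only [Complex.norm_two]
    have h5 : ‖t‖ * ‖A + B‖ ≤ ‖t‖ ^ 5 * (5 / 96) * 2 := by
      have hnn := norm_nonneg t
      calc ‖t‖ * ‖A + B‖
          ≤ ‖t‖ * (‖t‖ ^ 4 * (5 / 96) * 2) := by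
            exact mul_le_mul_of_nonneg_left habsAB hnn
        _ = ‖t‖ ^ 5 * (5 / 96) * 2 := by ring
    linarith
  linarith

lemma tendstoA : Tendsto (fun t : ℂ => (Complex.sin t - t * Complex.cos t) / t ^ 3)
    (nhdsWithin 0 {t : ℂ | t ≠ 0}) (nhds (1 / 3)) := by
  rw [← tendsto_sub_nhds_zero_iff, tendsto_zero_iff_norm_tendsto_zero]
  have hev : ∀ᶠ t : ℂ in nhdsWithin 0 {t : ℂ | t ≠ 0},
      ‖(Complex.sin t - t * Complex.cos t) / t ^ 3 - 1 / 3‖ ≤ 5 / 48 * ‖t‖ := by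
    have h1 : ∀ᶠ t : ℂ in nhdsWithin 0 {t : ℂ | t ≠ 0}, ‖t‖ ≤ 1 := by
      have := Metric.ball_mem_nhds (0 : ℂ) (by norm_num : (0:ℝ) < 1)
      filter_upwards [nhdsWithin_le_nhds this] with t ht
      simp only [Metric.mem_ball, Complex.dist_eq, sub_zero] at ht
      exact ht.le
    filter_upwards [h1, self_mem_nhdsWithin] with t h1t h2t
    have ht0 : t ≠ 0 := h2t
    have ht3 : t ^ 3 ≠ 0 := pow_ne_zero 3 ht0
    have heq : (Complex.sin t - t * Complex.cos t) / t ^ 3 - 1 / 3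
        = (Complex.sin t - t * Complex.cos t - t ^ 3 / 3) / t ^ 3 := by
      field_simp
    rw [heq]
    rw [norm_div]
    rw [div_le_iff₀ (norm_pos_iff.mpr ht3)]
    calc ‖Complex.sin t - t * Complex.cos t - t ^ 3 / 3‖
        ≤ 5 / 48 * ‖t‖ ^ 4 := key_bound t h1t
      _ = 5 / 48 * ‖t‖ * ‖t ^ 3‖ := by
          rw [norm_pow]; ring
  have hbnd : Tendsto (fun t : ℂ => 5 / 48 * ‖t‖)
      (nhdsWithin 0 {t : ℂ | t ≠ 0}) (nhds 0) := by
    have : Tendsto (fun t : ℂ => 5 / 48 * ‖t‖) (nhds 0) (nhds (5 / 48 * ‖(0:ℂ)‖)) :=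
      (tendsto_const_nhds.mul (continuous_norm.tendsto (0:ℂ)))
    simp only [norm_zero, mul_zero] at this
    exact this.mono_left nhdsWithin_le_nhds
  exact squeeze_zero' (by filter_upwards with t using norm_nonneg _) hev hbnd

lemma tendsto_sin_div : Tendsto (fun t : ℂ => Complex.sin t / t)
    (nhdsWithin 0 {t : ℂ | t ≠ 0}) (nhds 1) := by
  have h := (Complex.hasDerivAt_sin 0)
  rw [hasDerivAt_iff_tendsto_slope] at h
  simp only [Complex.cos_zero] at h
  have : ∀ᶠ t : ℂ in nhdsWithin 0 {t : ℂ | t ≠ 0},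
      slope Complex.sin 0 t = Complex.sin t / t := by
    filter_upwards with t
    simp [slope_def_field]
  exact (h.congr' this)

lemma tendsto_half : Tendsto (fun t : ℂ => t / 2) (nhdsWithin 0 {t : ℂ | t ≠ 0})
    (nhdsWithin 0 {t : ℂ | t ≠ 0}) := by
  rw [tendsto_nhdsWithin_iff]
  constructor
  · have : Tendsto (fun t : ℂ => t / 2) (nhds 0) (nhds (0 / 2)) :=
      (tendsto_id.div_const 2)
    simpa using this.mono_left nhdsWithin_le_nhds
  · filter_upwards [self_mem_nhdsWithin] with t ht
    exact div_ne_zero ht two_ne_zero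

lemma tendstoB : Tendsto Phi (nhdsWithin 0 {t : ℂ | t ≠ 0})
    (nhds ((2 * Real.sqrt 2 / (3 * Real.pi) : ℝ) : ℂ)) := by
  have h2 : Tendsto (fun t : ℂ => Complex.sin (t / 2) / (t / 2))
      (nhdsWithin 0 {t : ℂ | t ≠ 0}) (nhds 1) := tendsto_sin_div.comp tendsto_half
  have h3 : Tendsto (fun t : ℂ => (t / 2) / Complex.sin (t / 2))
      (nhdsWithin 0 {t : ℂ | t ≠ 0}) (nhds 1) := by
    have := (h2.inv₀ one_ne_zero)
    simp only [inv_div, inv_one] at this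
    exact this
  have hconst : Tendsto (fun _ : ℂ => (8 / ((2 * Real.sqrt 2 * Real.pi : ℝ) : ℂ)))
      (nhdsWithin 0 {t : ℂ | t ≠ 0}) (nhds (8 / ((2 * Real.sqrt 2 * Real.pi : ℝ) : ℂ))) :=
    tendsto_const_nhds
  have hprod := tendstoA.mul (((h3.mul h3).mul h3).mul hconst)
  have heq : ∀ᶠ t : ℂ in nhdsWithin 0 {t : ℂ | t ≠ 0},
      (Complex.sin t - t * Complex.cos t) / t ^ 3 *
        ((t / 2 / Complex.sin (t / 2) * (t / 2 / Complex.sin (t / 2)) *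
          (t / 2 / Complex.sin (t / 2))) * (8 / ((2 * Real.sqrt 2 * Real.pi : ℝ) : ℂ)))
      = Phi t := by
    filter_upwards [self_mem_nhdsWithin] with t ht0
    rcases eq_or_ne (Complex.sin (t / 2)) 0 with hs | hs
    · simp [Phi, hs]
    · have hC : ((2 * Real.sqrt 2 * Real.pi : ℝ) : ℂ) ≠ 0 := by
        simp only [ne_eq, Complex.ofReal_eq_zero]
        positivity
      have hs3 : Complex.sin (t / 2) ^ 3 ≠ 0 := pow_ne_zero 3 hs
      have e : t / 2 / Complex.sin (t / 2) * (t / 2 / Complex.sin (t / 2)) *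
          (t / 2 / Complex.sin (t / 2)) = t ^ 3 / (8 * Complex.sin (t / 2) ^ 3) := by
        field_simp
        ring
      have ht3 : t ^ 3 ≠ 0 := pow_ne_zero 3 ht0
      rw [e, Phi, eq_div_iff (mul_ne_zero hC hs3)]
      have hre : (Complex.sin t - t * Complex.cos t) / t ^ 3 *
          (t ^ 3 / (8 * Complex.sin (t / 2) ^ 3) * (8 / ((2 * Real.sqrt 2 * Real.pi : ℝ) : ℂ))) *
          (((2 * Real.sqrt 2 * Real.pi : ℝ) : ℂ) * Complex.sin (t / 2) ^ 3)
          = (Complex.sin t - t * Complex.cos t) * (t ^ 3 / t ^ 3) *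
            (Complex.sin (t / 2) ^ 3 / Complex.sin (t / 2) ^ 3) *
            (((2 * Real.sqrt 2 * Real.pi : ℝ) : ℂ) / ((2 * Real.sqrt 2 * Real.pi : ℝ) : ℂ)) *
            ((8 : ℂ) / 8) := by
        ring
      rw [hre, div_self ht3, div_self hs3, div_self hC, div_self (by norm_num : (8:ℂ) ≠ 0)]
      ring
  have hval : (1 / 3 : ℂ) * (1 * 1 * 1 * (8 / ((2 * Real.sqrt 2 * Real.pi : ℝ) : ℂ)))
      = ((2 * Real.sqrt 2 / (3 * Real.pi) : ℝ) : ℂ) := by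
    have hs2 : Real.sqrt 2 * Real.sqrt 2 = 2 := Real.mul_self_sqrt (by norm_num)
    have hπ : (Real.pi : ℝ) ≠ 0 := Real.pi_ne_zero
    have hs0 : Real.sqrt 2 ≠ 0 := by positivity
    rw [show (2 * Real.sqrt 2 / (3 * Real.pi) : ℝ) = 8 / (3 * (2 * Real.sqrt 2 * Real.pi)) by
      field_simp
      linear_combination 4 * hs2]
    push_cast
    have : ((Real.sqrt 2 : ℝ) : ℂ) ≠ 0 := by exact_mod_cast hs0
    have hπc : ((Real.pi : ℝ) : ℂ) ≠ 0 := by exact_mod_cast hπ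
    field_simp
  rw [← hval]
  exact hprod.congr' heq

lemma cpow_half_sq {a : ℂ} (ha : 0 < a.re) : (a ^ 2) ^ ((1 : ℂ) / 2) = a := by
  have ha0 : a ≠ 0 := by
    intro h; rw [h] at ha; simp at ha
  have ha2 : a ^ 2 ≠ 0 := pow_ne_zero 2 ha0
  have harg : |Complex.arg a| < Real.pi / 2 :=
    Complex.abs_arg_lt_pi_div_two_iff.mpr (Or.inl ha)
  have hlog : Complex.log (a ^ 2) = 2 * Complex.log a := by
    rw [pow_two]
    rw [Complex.log_mul ha0 ha0]
    · ring
    · constructor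
      · cases abs_lt.mp harg; linarith
      · cases abs_lt.mp harg; linarith [Real.pi_pos]
  rw [Complex.cpow_def_of_ne_zero ha2, hlog]
  rw [show (2 : ℂ) * Complex.log a * (1 / 2) = Complex.log a by ring]
  exact Complex.exp_log ha0

lemma re_sin_pos {w : ℂ} (h1 : 0 < w.re) (h2 : w.re < Real.pi) : 0 < (Complex.sin w).re := by
  have hre : (Complex.sin w).re = Real.sin w.re * Real.cosh w.im := by
    rw [Complex.sin_eq]
    simp only [← Complex.ofReal_sin, ← Complex.ofReal_cos, ← Complex.ofReal_cosh,
      ← Complex.ofReal_sinh, ← Complex.ofReal_mul]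
    simp [Complex.sin_ofReal_re]
  rw [hre]
  exact mul_pos (Real.sin_pos_of_pos_of_lt_pi h1 h2) (Real.cosh_pos w.im)

lemma pointwise_id {z : ℂ} (hz : z ∈ Dslit) :
    K1C z / ((1 + z) ^ ((3 : ℂ) / 2)) = Phi (tC z) := by
  have hsq := Dslit_sq_ne hz
  have hw : (1 : ℂ) + z ≠ 0 := by
    intro h
    have hzeq : z = -1 := by linear_combination h
    subst hzeq
    exact hz ⟨by simp, Or.inr (by simp)⟩
  set t := tC z with htdef
  have hrehalf1 : 0 < (t / 2).re := by
    have := re_tC_pos hz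
    simp only [Complex.div_re]
    simp [Complex.div_ofNat_re]
    linarith [re_tC_pos hz]
  have hrehalf2 : (t / 2).re < Real.pi := by
    have := re_tC_lt z
    simp [Complex.div_ofNat_re]
    linarith
  have hres : 0 < (Complex.sin (t / 2)).re := re_sin_pos hrehalf1 hrehalf2
  set a : ℂ := ((Real.sqrt 2 : ℝ) : ℂ) * Complex.sin (t / 2) with hadef
  have hare : 0 < a.re := by
    rw [hadef]
    have h2 : (0:ℝ) < Real.sqrt 2 := by positivity
    simp only [Complex.mul_re, Complex.ofReal_re, Complex.ofReal_im]
    simp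
    nlinarith
  have hsq2 : ((Real.sqrt 2 : ℝ) : ℂ) ^ 2 = 2 := by
    rw [← Complex.ofReal_pow]
    norm_cast
    exact Real.sq_sqrt (by norm_num)
  have h1z : (1 : ℂ) + z = a ^ 2 := by
    have hcos := cos_tC hsq
    have hcos2 : Complex.cos t = 1 - 2 * Complex.sin (t / 2) ^ 2 := by
      have h2 : Complex.cos (2 * (t / 2)) = 1 - 2 * Complex.sin (t / 2) ^ 2 := by
        rw [Complex.cos_two_mul]
        have := Complex.sin_sq_add_cos_sq (t / 2)
        linear_combination 2 * this
      rw [show 2 * (t / 2) = t by ring] at h2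
      exact h2
    rw [hadef, mul_pow, hsq2]
    have : (1 : ℂ) + z = 1 - Complex.cos t := by rw [hcos]; ring
    rw [this, hcos2]
    ring
  have hcpow : (1 + z) ^ ((3 : ℂ) / 2) = a ^ 3 := by
    have hhalf : (1 + z) ^ ((1 : ℂ) / 2) = a := by
      rw [h1z]; exact cpow_half_sq hare
    have h32 : ((3 : ℂ) / 2) = 1 / 2 + (1 / 2 + 1 / 2) := by norm_num
    rw [h32, Complex.cpow_add _ _ hw, Complex.cpow_add _ _ hw, hhalf]
    ring
  rw [K1C_form hsq, hcpow, Phi, hadef]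
  rw [div_div]
  congr 1
  rw [mul_pow]
  have h3r : Real.sqrt 2 ^ 3 = 2 * Real.sqrt 2 := by
    rw [pow_succ, Real.sq_sqrt (by norm_num : (0:ℝ) ≤ 2)]
  have h3 : ((Real.sqrt 2 : ℝ) : ℂ) ^ 3 = 2 * ((Real.sqrt 2 : ℝ) : ℂ) := by
    rw [← Complex.ofReal_pow, h3r]
    push_cast
    ring
  rw [h3]
  push_cast
  ring

lemma base : Tendsto (fun z : ℂ => K1C z / ((1 + z) ^ ((3 : ℂ) / 2)))
    (nhdsWithin (-1 : ℂ) Dslit) (nhds ((2 * Real.sqrt 2 / (3 * Real.pi) : ℝ) : ℂ)) := by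
  have h := tendstoB.comp tendsto_tC
  apply h.congr'
  filter_upwards [self_mem_nhdsWithin] with z hz
  exact (pointwise_id hz).symm

lemma cpow_real_sqrt {x : ℝ} (h1 : -1 ≤ x) (h2 : x ≤ 1) :
    ((1 : ℂ) - (x : ℂ) ^ 2) ^ ((1 : ℂ) / 2) = ((Real.sqrt (1 - x ^ 2) : ℝ) : ℂ) := by
  have hnn : (0:ℝ) ≤ 1 - x ^ 2 := by nlinarith
  have hcast : ((1 : ℂ) - (x : ℂ) ^ 2) = (((1 - x ^ 2 : ℝ)) : ℂ) := by push_cast; ring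
  rw [hcast, show ((1:ℂ)/2) = (((1/2 : ℝ)) : ℂ) by norm_num, ← Complex.ofReal_cpow hnn,
    Real.sqrt_eq_rpow]

lemma log_unit_circle {x : ℝ} (h1 : -1 ≤ x) (h2 : x ≤ 1) :
    Complex.log ((x : ℂ) + Complex.I * ((Real.sqrt (1 - x ^ 2) : ℝ) : ℂ))
      = ((Real.arccos x : ℝ) : ℂ) * Complex.I := by
  set θ := Real.arccos x with hθ
  have hcos : Real.cos θ = x := Real.cos_arccos h1 h2
  have hsin : Real.sin θ = Real.sqrt (1 - x ^ 2) := by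
    rw [hθ, Real.sin_arccos]
  have hform : (x : ℂ) + Complex.I * ((Real.sqrt (1 - x ^ 2) : ℝ) : ℂ)
      = Complex.cos (θ : ℂ) + Complex.sin (θ : ℂ) * Complex.I := by
    rw [← Complex.ofReal_cos, ← Complex.ofReal_sin, hcos, hsin]
    ring
  rw [hform]
  rw [Complex.log, Complex.norm_cos_add_sin_mul_I, Complex.arg_cos_add_sin_mul_I]
  · simp
  · constructor
    · have := Real.arccos_nonneg x
      linarith [Real.pi_pos]
    · exact Real.arccos_le_pi x

lemma K1C_real_eq {x : ℝ} (h1 : -1 ≤ x) (h2 : x ≤ 1) :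
    K1C ((x : ℝ) : ℂ) = ((k1Real x : ℝ) : ℂ) := by
  rw [K1C, cpow_real_sqrt h1 h2, log_unit_circle h1 h2, k1Real]
  have hπ : ((Real.pi : ℝ) : ℂ) ≠ 0 := by
    exact_mod_cast Real.pi_ne_zero
  push_cast
  rw [div_eq_div_iff hπ hπ]
  linear_combination ((Real.pi : ℂ) * (x : ℂ) * ((Real.arccos x : ℝ) : ℂ)) * Complex.I_sq

lemma k1_neg_one : k1Real (-1) = 0 := by
  rw [k1Real, Real.arccos_neg_one]
  norm_num

lemma k1_mem {x : ℝ} (h0 : 0 ≤ x) (h1 : x < 1) : 0 ≤ k1Real x ∧ k1Real x < 1 := by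
  have hθpos : 0 < Real.arccos x := Real.arccos_pos.mpr h1
  have hθle : Real.arccos x ≤ Real.pi / 2 := Real.arccos_le_pi_div_two.mpr h0
  have hsin : Real.sqrt (1 - x ^ 2) = Real.sin (Real.arccos x) := (Real.sin_arccos x).symm
  have hsinle : Real.sin (Real.arccos x) ≤ Real.arccos x :=
    Real.sin_le (Real.arccos_nonneg x)
  have hπ : 0 < Real.pi := Real.pi_pos
  constructor
  · apply div_nonneg _ hπ.le
    have : 0 ≤ Real.sqrt (1 - x ^ 2) := Real.sqrt_nonneg _
    nlinarith
  · rw [k1Real, div_lt_one hπ, hsin]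
    nlinarith

lemma iter_mem (j : ℕ) : 0 ≤ k1Real^[j] 0 ∧ k1Real^[j] 0 < 1 := by
  induction j with
  | zero => norm_num
  | succ n ih =>
    rw [Function.iterate_succ_apply']
    exact k1_mem ih.1 ih.2

lemma K1C_hasDeriv {x : ℝ} (h1 : -1 < x) (h2 : x < 1) :
    HasDerivAt K1C ((k0Real x : ℝ) : ℂ) ((x : ℝ) : ℂ) := by
  set x₀ : ℂ := ((x : ℝ) : ℂ) with hx₀
  set r : ℝ := Real.sqrt (1 - x ^ 2) with hr
  have hx2 : x ^ 2 < 1 := by nlinarith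
  have hrpos : 0 < r := Real.sqrt_pos.mpr (by nlinarith)
  set s₀ : ℂ := ((r : ℝ) : ℂ) with hs₀
  have hs₀ne : s₀ ≠ 0 := by
    simp only [hs₀, ne_eq, Complex.ofReal_eq_zero]
    exact hrpos.ne'
  have hbase : (1 : ℂ) - x₀ ^ 2 = (((1 - x ^ 2 : ℝ)) : ℂ) := by push_cast; ring
  have hsval : ((1 : ℂ) - x₀ ^ 2) ^ ((1 : ℂ) / 2) = s₀ := cpow_real_sqrt h1.le h2.le
  have hslit : (1 : ℂ) - x₀ ^ 2 ∈ Complex.slitPlane := by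
    rw [hbase]
    apply Complex.mem_slitPlane_iff.mpr
    left
    simp only [Complex.ofReal_re]
    nlinarith
  -- derivative of z ↦ 1 - z^2
  have hinner : HasDerivAt (fun z : ℂ => 1 - z ^ 2) (-(2 * x₀)) x₀ := by
    have := (hasDerivAt_pow 2 x₀).const_sub 1
    simpa using this
  -- derivative of sC
  have hsder : HasDerivAt (fun z : ℂ => (1 - z ^ 2) ^ ((1 : ℂ) / 2)) (-x₀ / s₀) x₀ := by
    have h := hinner.cpow_const (c := (1 : ℂ) / 2) hslit
    have hval : (1 : ℂ) / 2 * (1 - x₀ ^ 2) ^ ((1 : ℂ) / 2 - 1) * (-(2 * x₀)) = -x₀ / s₀ := by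
      rw [show ((1 : ℂ) / 2 - 1) = -(1 / 2) by norm_num, Complex.cpow_neg, hsval]
      field_simp
    rwa [hval] at h
  -- zeta and log
  have hζval : x₀ + Complex.I * s₀ ≠ 0 := by
    intro h
    have := congrArg Complex.im h
    simp [hx₀, hs₀] at this
    exact hrpos.ne' this
  have hζslit : x₀ + Complex.I * s₀ ∈ Complex.slitPlane := by
    apply Complex.mem_slitPlane_iff.mpr
    right
    simp [hx₀, hs₀]
    exact hrpos.ne'
  have hζder : HasDerivAt (fun z : ℂ => z + Complex.I * ((1 - z ^ 2) ^ ((1 : ℂ) / 2)))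
      (1 + Complex.I * (-x₀ / s₀)) x₀ :=
    (hasDerivAt_id x₀).add (hsder.const_mul Complex.I)
  have hζx : x₀ + Complex.I * ((1 - x₀ ^ 2) ^ ((1 : ℂ) / 2)) = x₀ + Complex.I * s₀ := by
    rw [hsval]
  have hlogder : HasDerivAt (fun z : ℂ => Complex.log (z + Complex.I * ((1 - z ^ 2) ^ ((1 : ℂ) / 2))))
      ((1 + Complex.I * (-x₀ / s₀)) / (x₀ + Complex.I * s₀)) x₀ := by
    have h := hζder.clog (f := fun z : ℂ => z + Complex.I * ((1 - z ^ 2) ^ ((1 : ℂ) / 2)))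
      (by show x₀ + Complex.I * ((1 - x₀ ^ 2) ^ ((1 : ℂ) / 2)) ∈ Complex.slitPlane
          rw [hζx]; exact hζslit)
    rw [hζx] at h
    exact h
  have hmul : HasDerivAt (fun z : ℂ =>
      z * ((Real.pi : ℂ) + Complex.I * Complex.log (z + Complex.I * ((1 - z ^ 2) ^ ((1 : ℂ) / 2)))))
      (1 * ((Real.pi : ℂ) + Complex.I * Complex.log (x₀ + Complex.I * s₀))
        + x₀ * (Complex.I * ((1 + Complex.I * (-x₀ / s₀)) / (x₀ + Complex.I * s₀)))) x₀ := by
    have h := (hasDerivAt_id x₀).mul ((hlogder.const_mul Complex.I).const_add (Real.pi : ℂ))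
    rw [hζx] at h
    exact h
  have htot : HasDerivAt K1C
      ((1 * ((Real.pi : ℂ) + Complex.I * Complex.log (x₀ + Complex.I * s₀))
        + x₀ * (Complex.I * ((1 + Complex.I * (-x₀ / s₀)) / (x₀ + Complex.I * s₀)))
        + -x₀ / s₀) / (Real.pi : ℂ)) x₀ :=
    (hmul.add hsder).div_const _
  have hlogval : Complex.log (x₀ + Complex.I * s₀) = ((Real.arccos x : ℝ) : ℂ) * Complex.I :=
    log_unit_circle h1.le h2.le
  have hmid : Complex.I * ((1 + Complex.I * (-x₀ / s₀)) / (x₀ + Complex.I * s₀)) = 1 / s₀ := by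
    field_simp
    linear_combination (-x₀) * Complex.I_sq
  have hπ : ((Real.pi : ℝ) : ℂ) ≠ 0 := by exact_mod_cast Real.pi_ne_zero
  have hval2 : (1 * ((Real.pi : ℂ) + Complex.I * Complex.log (x₀ + Complex.I * s₀))
      + x₀ * (Complex.I * ((1 + Complex.I * (-x₀ / s₀)) / (x₀ + Complex.I * s₀)))
      + -x₀ / s₀) / (Real.pi : ℂ) = ((k0Real x : ℝ) : ℂ) := by
    rw [hmid, hlogval, k0Real]
    push_cast
    rw [div_eq_div_iff hπ hπ]
    have hcancel : x₀ * (1 / s₀) + -x₀ / s₀ = 0 := by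
      field_simp
      ring
    linear_combination (((Real.arccos x : ℝ) : ℂ) * ((Real.pi : ℝ) : ℂ)) * Complex.I_sq
      + ((Real.pi : ℝ) : ℂ) * hcancel
  rw [hval2] at htot
  exact htot

lemma iter_real (m : ℕ) : K1C^[m] (((0 : ℝ) : ℂ)) = ((k1Real^[m] 0 : ℝ) : ℂ) := by
  induction m with
  | zero => simp
  | succ n ih =>
    rw [Function.iterate_succ_apply', Function.iterate_succ_apply', ih]
    exact K1C_real_eq (by linarith [(iter_mem n).1]) (iter_mem n).2.le

lemma iterderiv (m : ℕ) : HasDerivAt (K1C^[m])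
    (((∏ j ∈ Finset.range m, k0Real (k1Real^[j] 0) : ℝ)) : ℂ) 0 := by
  induction m with
  | zero =>
    rw [Function.iterate_zero]
    simpa using (hasDerivAt_id (0 : ℂ))
  | succ n ih =>
    have hu := iter_mem n
    have hK : HasDerivAt K1C ((k0Real (k1Real^[n] 0) : ℝ) : ℂ) ((k1Real^[n] 0 : ℝ) : ℂ) :=
      K1C_hasDeriv (by linarith [hu.1]) hu.2
    have hpt : K1C^[n] (0 : ℂ) = ((k1Real^[n] 0 : ℝ) : ℂ) := by
      have := iter_real n
      simpa using this
    rw [← hpt] at hK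
    have hcomp := HasDerivAt.comp (0 : ℂ) hK ih
    have : K1C ∘ K1C^[n] = K1C^[n + 1] := (Function.iterate_succ' K1C n).symm
    rw [this] at hcomp
    have hval : ((k0Real (k1Real^[n] 0) : ℝ) : ℂ) *
        ((∏ j ∈ Finset.range n, k0Real (k1Real^[j] 0) : ℝ) : ℂ)
        = ((∏ j ∈ Finset.range (n + 1), k0Real (k1Real^[j] 0) : ℝ) : ℂ) := by
      rw [Finset.prod_range_succ]
      push_cast
      ring
    rwa [hval] at hcomp

lemma K1C_neg_one : K1C (-1 : ℂ) = 0 := by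
  have := K1C_real_eq (x := -1) le_rfl (by norm_num)
  rw [k1_neg_one] at this
  simpa using this

lemma norm_cpow32 (w : ℂ) : ‖w ^ ((3 : ℂ) / 2)‖ = ‖w‖ ^ ((3 : ℝ) / 2) := by
  rcases eq_or_ne w 0 with h | h
  · rw [h, Complex.zero_cpow (by norm_num)]
    simp [Real.zero_rpow (by norm_num : ((3:ℝ)/2) ≠ 0)]
  · rw [Complex.norm_cpow_of_ne_zero h]
    norm_num

theorem k1_iterate_expansion_at_minus_one (k : ℕ) (hk : 1 ≤ k) :
    (0 : ℝ) < (2 * Real.sqrt 2 / (3 * Real.pi)) *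
        ∏ j ∈ Finset.range (k - 1), k0Real (k1Real^[j + 1] (-1)) ∧
    Tendsto (fun z : ℂ => (K1C^[k] z - K1C^[k] (-1)) / ((1 + z) ^ ((3 : ℂ) / 2)))
      (nhdsWithin (-1) Dslit)
      (nhds (((2 * Real.sqrt 2 / (3 * Real.pi)) *
        ∏ j ∈ Finset.range (k - 1), k0Real (k1Real^[j + 1] (-1)) : ℝ) : ℂ)) := by
  obtain ⟨m, rfl⟩ : ∃ m, k = m + 1 := ⟨k - 1, by omega⟩
  have hm : m + 1 - 1 = m := rfl
  have hshift : ∀ j : ℕ, k1Real^[j + 1] (-1) = k1Real^[j] 0 := fun j => by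
    rw [Function.iterate_succ_apply, k1_neg_one]
  have hprodeq : ∏ j ∈ Finset.range m, k0Real (k1Real^[j + 1] (-1))
      = ∏ j ∈ Finset.range m, k0Real (k1Real^[j] 0) :=
    Finset.prod_congr rfl fun j _ => by rw [hshift]
  have hk0pos : ∀ j : ℕ, 0 < k0Real (k1Real^[j] 0) := by
    intro j
    have h := iter_mem j
    have harc : Real.arccos (k1Real^[j] 0) ≤ Real.pi / 2 :=
      Real.arccos_le_pi_div_two.mpr h.1
    rw [k0Real]
    apply div_pos _ Real.pi_pos
    linarith [Real.pi_pos]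
  have hc1pos : (0:ℝ) < 2 * Real.sqrt 2 / (3 * Real.pi) := by positivity
  have hprodpos : (0:ℝ) < ∏ j ∈ Finset.range m, k0Real (k1Real^[j + 1] (-1)) := by
    rw [hprodeq]
    exact Finset.prod_pos fun j _ => hk0pos j
  constructor
  · rw [hm]
    exact mul_pos hc1pos hprodpos
  -- Tendsto part
  rw [hm, hprodeq]
  set c1 : ℝ := 2 * Real.sqrt 2 / (3 * Real.pi) with hc1
  set P : ℝ := ∏ j ∈ Finset.range m, k0Real (k1Real^[j] 0) with hP
  have hc1ne : ((c1 : ℝ) : ℂ) ≠ 0 := by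
    simp only [ne_eq, Complex.ofReal_eq_zero]
    exact hc1pos.ne'
  -- (1+z)^{3/2} → 0
  have h32 : Tendsto (fun z : ℂ => (1 + z) ^ ((3 : ℂ) / 2)) (nhdsWithin (-1 : ℂ) Dslit)
      (nhds 0) := by
    rw [tendsto_zero_iff_norm_tendsto_zero]
    simp only [norm_cpow32]
    have habs : Tendsto (fun z : ℂ => ‖1 + z‖) (nhdsWithin (-1 : ℂ) Dslit)
        (nhds 0) := by
      have hcont : Tendsto (fun z : ℂ => ‖1 + z‖) (nhds (-1 : ℂ))
          (nhds (‖(1 : ℂ) + -1‖)) :=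
        Continuous.tendsto (f := fun z : ℂ => ‖1 + z‖) (by fun_prop) (-1)
      simp only [add_neg_cancel, norm_zero] at hcont
      exact hcont.mono_left nhdsWithin_le_nhds
    have hrpow : Tendsto (fun x : ℝ => x ^ ((3:ℝ)/2)) (nhds 0) (nhds 0) := by
      have := (Real.continuousAt_rpow_const 0 ((3:ℝ)/2) (Or.inr (by norm_num))).tendsto
      rwa [Real.zero_rpow (by norm_num : ((3:ℝ)/2) ≠ 0)] at this
    exact hrpow.comp habs
  -- nonvanishing of the base quotient
  have hne : ∀ᶠ z in nhdsWithin (-1 : ℂ) Dslit, K1C z / ((1 + z) ^ ((3 : ℂ) / 2)) ≠ 0 :=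
    base.eventually_ne hc1ne
  have hKne : ∀ᶠ z in nhdsWithin (-1 : ℂ) Dslit, K1C z ≠ 0 := by
    filter_upwards [hne] with z hz h0
    exact hz (by rw [h0, zero_div])
  have hwne : ∀ᶠ z in nhdsWithin (-1 : ℂ) Dslit, (1 + z) ^ ((3 : ℂ) / 2) ≠ 0 := by
    filter_upwards [self_mem_nhdsWithin] with z hz
    have h1z : (1 : ℂ) + z ≠ 0 := by
      intro h
      have : z = -1 := by linear_combination h
      subst this
      exact hz ⟨by simp, Or.inr (by simp)⟩
    intro h
    rcases (Complex.cpow_eq_zero_iff _ _).mp h with ⟨h', _⟩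
    exact h1z h'
  have hK0 : Tendsto K1C (nhdsWithin (-1 : ℂ) Dslit) (nhds 0) := by
    have hmul := base.mul h32
    rw [show ((c1 : ℝ) : ℂ) * 0 = 0 by ring] at hmul
    apply hmul.congr'
    filter_upwards [hwne] with z hz
    exact div_mul_cancel₀ _ hz
  have hKz : Tendsto K1C (nhdsWithin (-1 : ℂ) Dslit) (nhdsWithin 0 {w : ℂ | w ≠ 0}) := by
    rw [tendsto_nhdsWithin_iff]
    exact ⟨hK0, hKne⟩
  have hslope : Tendsto (slope (K1C^[m]) 0) (nhdsWithin 0 {w : ℂ | w ≠ 0})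
      (nhds ((P : ℝ) : ℂ)) := by
    have := hasDerivAt_iff_tendsto_slope.mp (iterderiv m)
    exact this
  have hcomp := hslope.comp hKz
  have hfinal := hcomp.mul base
  have hiterpt : K1C^[m + 1] (-1 : ℂ) = K1C^[m] 0 := by
    rw [Function.iterate_succ_apply, K1C_neg_one]
  have hev : ∀ᶠ z in nhdsWithin (-1 : ℂ) Dslit,
      (slope (K1C^[m]) 0 ∘ K1C) z * (K1C z / (1 + z) ^ ((3:ℂ)/2))
        = (K1C^[m + 1] z - K1C^[m + 1] (-1)) / (1 + z) ^ ((3:ℂ)/2) := by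
    filter_upwards [hKne] with z hz
    simp only [Function.comp_apply, slope_def_field]
    rw [Function.iterate_succ_apply, hiterpt]
    rw [sub_zero]
    rw [div_mul_div_comm]
    rw [mul_comm (K1C^[m] (K1C z) - K1C^[m] 0) (K1C z), mul_comm (K1C z) ((1 + z) ^ ((3:ℂ)/2))]
    rw [mul_comm ((1 + z) ^ ((3:ℂ)/2)) (K1C z), mul_div_mul_left _ _ hz]
  have := hfinal.congr' hev
  have hcast : ((P : ℝ) : ℂ) * ((c1 : ℝ) : ℂ) = ((c1 * P : ℝ) : ℂ) := by
    push_cast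
    ring
  rw [hcast] at this
  exact this
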